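/- The subspace S = span{ x^{𝒩 + s n} y^{ℳ − s m} : s = 0, 1, …, r } with r = min_k ⌊ℳ_k / m_k⌋ is invariant under the operator H_1 = y^m ∂_x^n + x^n ∂_y^m, provided 𝒩_{l'} < n_{l'} for at least one index l'. -/

import Mathlib

open MvPolynomial

noncomputable def Dxn {N M : ℕ} (n : Fin N → ℕ) :
    Module.End ℝ (MvPolynomial (Fin N ⊕ Fin M) ℝ) :=
  (List.ofFn fun l : Fin N =>
    ((pderiv (Sum.inl l)).toLinearMap : Module.End ℝ (MvPolynomial (Fin N ⊕ Fin M) ℝ)) ^ n l).prod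

noncomputable def Dym {N M : ℕ} (m : Fin M → ℕ) :
    Module.End ℝ (MvPolynomial (Fin N ⊕ Fin M) ℝ) :=
  (List.ofFn fun k : Fin M =>
    ((pderiv (Sum.inr k)).toLinearMap : Module.End ℝ (MvPolynomial (Fin N ⊕ Fin M) ℝ)) ^ m k).prod

/-- `H₁ = y^m ∂_x^n + x^n ∂_y^m`. -/
noncomputable def H1 {N M : ℕ} (n : Fin N → ℕ) (m : Fin M → ℕ) :
    Module.End ℝ (MvPolynomial (Fin N ⊕ Fin M) ℝ) :=
  (LinearMap.mulLeft ℝ (∏ k : Fin M, X (Sum.inr k) ^ m k)).comp (Dxn n) +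
    (LinearMap.mulLeft ℝ (∏ l : Fin N, X (Sum.inl l) ^ n l)).comp (Dym m)

/-- The monomial `x^i y^j`. -/
noncomputable def mon {N M : ℕ} (i : Fin N → ℕ) (j : Fin M → ℕ) :
    MvPolynomial (Fin N ⊕ Fin M) ℝ :=
  monomial (Finsupp.equivFunOnFinite.symm (Sum.elim i j)) 1

theorem pderiv_pow_monomial' {σ : Type*} [DecidableEq σ] (i : σ) (k : ℕ) (s : σ →₀ ℕ) (a : ℝ) :
    (((pderiv i).toLinearMap : Module.End ℝ (MvPolynomial σ ℝ)) ^ k) (monomial s a) =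
      monomial (s - Finsupp.single i k) (a * (s i).descFactorial k) := by
  induction k with
  | zero => simp
  | succ k ih =>
    rw [pow_succ', Module.End.mul_apply, ih]
    simp only [Derivation.coeFn_coe, pderiv_monomial]
    congr 1
    · rw [tsub_tsub, ← Finsupp.single_add]
    · rw [Finsupp.tsub_apply, Finsupp.single_eq_same, Nat.descFactorial_succ]
      push_cast
      ring

theorem list_prod_pderiv_pow_monomial' {σ : Type*} [DecidableEq σ] (c : σ → ℕ) (L : List σ)
    (hL : L.Nodup) (s : σ →₀ ℕ) (a : ℝ) :
    ((L.map fun i => ((pderiv i).toLinearMap : Module.End ℝ (MvPolynomial σ ℝ)) ^ c i).prod)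
        (monomial s a) =
      monomial (s - (L.map fun i => Finsupp.single i (c i)).sum)
        (a * (L.map fun i => ((s i).descFactorial (c i) : ℝ)).prod) := by
  induction L with
  | nil => simp
  | cons i L ih =>
    obtain ⟨hi, hL⟩ := List.nodup_cons.mp hL
    simp only [List.map_cons, List.prod_cons, List.sum_cons, Module.End.mul_apply, ih hL,
      pderiv_pow_monomial']
    have hTi : ((L.map fun i => Finsupp.single i (c i)).sum) i = 0 := by
      rw [← Finsupp.applyAddHom_apply, map_list_sum]
      simp only [List.map_map]
      apply List.sum_eq_zero
      intro x hx
      simp only [List.mem_map] at hx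
      obtain ⟨j, hj, rfl⟩ := hx
      have : j ≠ i := fun h => hi (h ▸ hj)
      simp [Function.comp, Finsupp.single_apply, this]
    congr 1
    · rw [tsub_tsub, add_comm]
    · rw [Finsupp.tsub_apply, hTi, Nat.sub_zero]
      ring

theorem prodXpow' {σ ι : Type*} (s : Finset ι) (g : ι → σ) (c : ι → ℕ) :
    (∏ a ∈ s, (X (g a) : MvPolynomial σ ℝ) ^ c a) =
      monomial (∑ a ∈ s, Finsupp.single (g a) (c a)) 1 := by
  classical
  induction s using Finset.induction with
  | empty => simp
  | insert _ _ h ih =>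
    rw [Finset.prod_insert h, Finset.sum_insert h, ih, X_pow_eq_monomial, monomial_mul, one_mul]

theorem H1_mon {N M : ℕ} (n : Fin N → ℕ) (m : Fin M → ℕ) (i : Fin N → ℕ) (j : Fin M → ℕ) :
    H1 n m (mon i j) =
      (∏ l, ((i l).descFactorial (n l) : ℝ)) • mon (fun l => i l - n l) (fun k => j k + m k)
      + (∏ k, ((j k).descFactorial (m k) : ℝ)) • mon (fun l => i l + n l) (fun k => j k - m k) := by
  classical
  set e : (Fin N ⊕ Fin M) →₀ ℕ := Finsupp.equivFunOnFinite.symm (Sum.elim i j) with he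
  have heapp : ∀ a, e a = Sum.elim i j a := fun a => rfl
  have hDx : Dxn (M := M) n = ((List.ofFn (Sum.inl : Fin N → Fin N ⊕ Fin M)).map
      fun a => ((pderiv a).toLinearMap : Module.End ℝ (MvPolynomial (Fin N ⊕ Fin M) ℝ))
        ^ (Sum.elim n m) a).prod := by
    rw [Dxn, List.map_ofFn]; rfl
  have hDy : Dym (N := N) m = ((List.ofFn (Sum.inr : Fin M → Fin N ⊕ Fin M)).map
      fun a => ((pderiv a).toLinearMap : Module.End ℝ (MvPolynomial (Fin N ⊕ Fin M) ℝ))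
        ^ (Sum.elim n m) a).prod := by
    rw [Dym, List.map_ofFn]; rfl
  have hx := list_prod_pderiv_pow_monomial' (Sum.elim n m) (List.ofFn (Sum.inl : Fin N → Fin N ⊕ Fin M))
    (List.nodup_ofFn.mpr Sum.inl_injective) e 1
  have hy := list_prod_pderiv_pow_monomial' (Sum.elim n m) (List.ofFn (Sum.inr : Fin M → Fin N ⊕ Fin M))
    (List.nodup_ofFn.mpr Sum.inr_injective) e 1
  rw [H1, mon, ← he, LinearMap.add_apply, LinearMap.comp_apply, LinearMap.comp_apply,
    hDx, hDy, hx, hy, LinearMap.mulLeft_apply, LinearMap.mulLeft_apply,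
    prodXpow' Finset.univ (Sum.inr : Fin M → Fin N ⊕ Fin M) m,
    prodXpow' Finset.univ (Sum.inl : Fin N → Fin N ⊕ Fin M) n,
    monomial_mul, monomial_mul]
  simp only [List.map_ofFn, List.sum_ofFn, List.prod_ofFn, Function.comp, heapp, Sum.elim_inl,
    Sum.elim_inr, one_mul, mon, smul_monomial, smul_eq_mul, mul_one]
  congr 2 <;>
  · refine congrArg _ (Finsupp.ext fun a => ?_)
    cases a with
    | inl l =>
      simp [Finsupp.finset_sum_apply, Finsupp.single_apply, heapp, Finsupp.tsub_apply] <;> omega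
    | inr k =>
      simp [Finsupp.finset_sum_apply, Finsupp.single_apply, heapp, Finsupp.tsub_apply] <;> omega

/-- the span of the monomials `x^{𝒩 + s n} y^{ℳ - s m}`, `0 ≤ s ≤ r`, with
`r = min_k ⌊ℳ_k / m_k⌋`, is invariant under `H₁`, provided `𝒩_{l'} < n_{l'}` for some `l'`. -/
theorem span_invariant_under_H1 {N M : ℕ} (hN : 1 ≤ N) (hM : 1 ≤ M)
    (n : Fin N → ℕ) (m : Fin M → ℕ) (hn : ∀ l, 0 < n l) (hm : ∀ k, 0 < m k)
    (𝒩 : Fin N → ℕ) (ℳ : Fin M → ℕ) (hrestr : ∃ l', 𝒩 l' < n l')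
    (r : ℕ) (hr : r = Finset.univ.inf' ⟨⟨0, hM⟩, Finset.mem_univ _⟩ fun k => ℳ k / m k) :
    ∀ f ∈ Submodule.span ℝ
        {f : MvPolynomial (Fin N ⊕ Fin M) ℝ | ∃ s ≤ r,
          f = mon (fun l => 𝒩 l + s * n l) fun k => ℳ k - s * m k},
      H1 n m f ∈ Submodule.span ℝ
        {f : MvPolynomial (Fin N ⊕ Fin M) ℝ | ∃ s ≤ r,
          f = mon (fun l => 𝒩 l + s * n l) fun k => ℳ k - s * m k} := by
  intro f hf
  induction hf using Submodule.span_induction with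
  | mem g hg =>
    obtain ⟨s, hs, rfl⟩ := hg
    rw [H1_mon]
    have hle : ∀ k, s * m k ≤ ℳ k := by
      intro k
      have h1 : r ≤ ℳ k / m k := hr ▸ Finset.inf'_le _ (Finset.mem_univ k)
      exact (Nat.le_div_iff_mul_le (hm k)).mp (le_trans hs h1)
    refine Submodule.add_mem _ ?_ ?_
    · rcases Nat.eq_zero_or_pos s with rfl | hspos
      · obtain ⟨l', hl'⟩ := hrestr
        have h0 : (∏ l, (((𝒩 l + 0 * n l)).descFactorial (n l) : ℝ)) = 0 := by
          apply Finset.prod_eq_zero (Finset.mem_univ l')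
          rw [Nat.descFactorial_eq_zero_iff_lt.mpr (by simpa using hl')]
          simp
        rw [h0, zero_smul]
        exact Submodule.zero_mem _
      · obtain ⟨t, rfl⟩ := Nat.exists_eq_succ_of_ne_zero (Nat.pos_iff_ne_zero.mp hspos)
        refine Submodule.smul_mem _ _ (Submodule.subset_span ⟨t, by omega, ?_⟩)
        congr 1
        · funext l
          simp only [Nat.succ_mul]
          omega
        · funext k
          have := hle k
          simp only [Nat.succ_mul] at this ⊢
          omega
    · rcases eq_or_lt_of_le hs with rfl | hlt
      · obtain ⟨k0, -, hk0⟩ := Finset.exists_mem_eq_inf'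
          (⟨⟨0, hM⟩, Finset.mem_univ _⟩ : Finset.univ.Nonempty) (fun k => ℳ k / m k)
        have hdiv : ℳ k0 / m k0 = s := by omega
        have h2 : ℳ k0 < (s + 1) * m k0 :=
          (Nat.div_lt_iff_lt_mul (hm k0)).mp (by omega)
        have h0 : (∏ k, (((ℳ k - s * m k)).descFactorial (m k) : ℝ)) = 0 := by
          apply Finset.prod_eq_zero (Finset.mem_univ k0)
          rw [Nat.descFactorial_eq_zero_iff_lt.mpr (by have := hm k0; simp only [Nat.succ_mul] at h2; omega)]
          simp
        rw [h0, zero_smul]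
        exact Submodule.zero_mem _
      · refine Submodule.smul_mem _ _ (Submodule.subset_span ⟨s + 1, hlt, ?_⟩)
        congr 1
        · funext l
          simp only [Nat.succ_mul]
          omega
        · funext k
          simp only [Nat.succ_mul]
          omega
  | zero => simp
  | add x y hx hy ihx ihy =>
    rw [map_add]
    exact Submodule.add_mem _ ihx ihy
  | smul a x hx ihx =>
    rw [map_smul]
    exact Submodule.smul_mem _ _ ihx
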